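/- Let l₁, l₂, m₁, m₂ be linear forms on ℂ⁴ with {l₁·m₁, l₂·m₂} linearly independent rank-2 quadratic forms such that every nonzero form in their span has rank exactly 2 (no rank-1 members). Then, after possibly swapping factors, l₁ and l₂ are proportional, i.e. the common factor gives a hyperplane contained in the base locus of the pencil, and the base locus is the union of the hyperplane {l₁ = 0} and the codimension-2 space {m₁ = m₂ = 0}. -/

import Mathlib

open Matrix

lemma vecMulVec_mulVec' (v w t : Fin 4 → ℂ) :
    vecMulVec v w *ᵥ t = (w ⬝ᵥ t) • v := by
  ext i
  simp only [mulVec, dotProduct, vecMulVec, of_apply, Pi.smul_apply, smul_eq_mul]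
  rw [Finset.sum_mul]
  exact Finset.sum_congr rfl (fun k _ => by ring)

lemma exists_dual {k : ℕ} (v : Fin k → (Fin 4 → ℂ)) (hv : LinearIndependent ℂ v) :
    ∃ u : Fin k → (Fin 4 → ℂ), ∀ i j, v i ⬝ᵥ u j = if i = j then 1 else 0 := by
  have hr : (Matrix.of v).rank = k := by
    have := hv.rank_matrix (M := Matrix.of v)
    simpa using this
  have hsurj : Function.Surjective (Matrix.of v).mulVecLin := by
    rw [← LinearMap.range_eq_top]
    apply Submodule.eq_top_of_finrank_eq
    rw [← Matrix.rank, hr]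
    simp
  choose u hu using fun j => hsurj (Pi.single j 1)
  refine ⟨u, fun i j => ?_⟩
  have := congrFun (hu j) i
  simpa [Matrix.mulVecLin_apply, Matrix.mulVec, Pi.single_apply] using this

lemma rank_lower (G : Matrix (Fin 4) (Fin 4) ℂ) {k : ℕ} (u : Fin k → Fin 4 → ℂ)
    (K : Matrix (Fin k) (Fin k) ℂ) (hK : ∀ i j, K i j = u i ⬝ᵥ (G *ᵥ u j)) :
    K.rank ≤ G.rank := by
  have hKe : K = Matrix.of u * (G * (Matrix.of u)ᵀ) := by
    ext i j
    rw [hK]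
    simp [Matrix.mul_apply, Matrix.mulVec, dotProduct, Matrix.transpose_apply, Finset.mul_sum]
  rw [hKe]
  exact le_trans (Matrix.rank_mul_le_right _ _) (Matrix.rank_mul_le_left _ _)

lemma li_triple {x y z : Fin 4 → ℂ} (h : LinearIndependent ℂ ![x, y])
    (hz : z ∉ Submodule.span ℂ {x, y}) : LinearIndependent ℂ ![x, y, z] := by
  have he : ![x, y, z] = Fin.snoc ![x, y] z := by
    funext i; fin_cases i <;> (simp [Fin.snoc]; try rfl)
  rw [he, linearIndependent_fin_snoc]
  refine ⟨h, ?_⟩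
  rw [show Set.range ![x, y] = {y, x} by simp, Set.pair_comm]
  exact hz

lemma li_quad {x y z w : Fin 4 → ℂ} (h : LinearIndependent ℂ ![x, y, z])
    (hw : w ∉ Submodule.span ℂ {x, y, z}) : LinearIndependent ℂ ![x, y, z, w] := by
  have he : ![x, y, z, w] = Fin.snoc ![x, y, z] w := by
    funext i; fin_cases i <;> (simp [Fin.snoc]; try rfl)
  rw [he, linearIndependent_fin_snoc]
  refine ⟨h, ?_⟩
  rw [show Set.range ![x, y, z] = {x, y, z} from ?_]
  · exact hw
  · ext t; simp [Fin.exists_fin_succ]; tauto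

lemma key (x y z : Fin 4 → ℂ) (hxyz : LinearIndependent ℂ ![x, y, z]) (d e f : ℂ)
    (hr : ∀ a b : ℂ, ¬(a = 0 ∧ b = 0) →
      (a • (vecMulVec x y + vecMulVec y x) +
        b • (vecMulVec z (d • x + e • y + f • z) + vecMulVec (d • x + e • y + f • z) z)).rank = 2) :
    f = 0 ∧ d * e = 0 := by
  obtain ⟨u, hu⟩ := exists_dual _ hxyz
  have hxu : ∀ j, x ⬝ᵥ u j = if (0 : Fin 3) = j then 1 else 0 := fun j => hu 0 j
  have hyu : ∀ j, y ⬝ᵥ u j = if (1 : Fin 3) = j then 1 else 0 := fun j => hu 1 j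
  have hzu : ∀ j, z ⬝ᵥ u j = if (2 : Fin 3) = j then 1 else 0 := fun j => hu 2 j
  have hdet : ∀ a b : ℂ, ¬(a = 0 ∧ b = 0) → -2*a^2*b*f + 2*a*b^2*(d*e) = 0 := by
    intro a b hab
    set w : Fin 4 → ℂ := d • x + e • y + f • z with hw
    set G : Matrix (Fin 4) (Fin 4) ℂ :=
      a • (vecMulVec x y + vecMulVec y x) + b • (vecMulVec z w + vecMulVec w z) with hG
    set K : Matrix (Fin 3) (Fin 3) ℂ := !![0, a, b*d; a, 0, b*e; b*d, b*e, 2*b*f] with hK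
    have expand : ∀ i j, u i ⬝ᵥ (G *ᵥ u j) =
        a*((x ⬝ᵥ u i)*(y ⬝ᵥ u j) + (y ⬝ᵥ u i)*(x ⬝ᵥ u j)) +
        b*((z ⬝ᵥ u i)*(d*(x ⬝ᵥ u j)+e*(y ⬝ᵥ u j)+f*(z ⬝ᵥ u j)) +
           (d*(x ⬝ᵥ u i)+e*(y ⬝ᵥ u i)+f*(z ⬝ᵥ u i))*(z ⬝ᵥ u j)) := by
      intro i j
      simp only [hG, hw, add_mulVec, smul_mulVec, vecMulVec_mulVec',
        dotProduct_add, dotProduct_smul, add_dotProduct, smul_dotProduct,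
        smul_eq_mul, dotProduct_comm (d • x + e • y + f • z)]
      simp only [dotProduct_add, dotProduct_smul, smul_eq_mul, dotProduct_comm x (u i),
        dotProduct_comm y (u i), dotProduct_comm z (u i), dotProduct_comm x (u j),
        dotProduct_comm y (u j), dotProduct_comm z (u j)]
      ring
    have hKG : ∀ i j, K i j = u i ⬝ᵥ (G *ᵥ u j) := by
      intro i j
      rw [expand i j]
      fin_cases i <;> fin_cases j <;>
        simp [hxu, hyu, hzu, hK, vecHead, vecTail] <;> ring
    have hrk : K.rank ≤ G.rank := rank_lower G u K hKG
    rw [hr a b hab] at hrk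
    by_contra hne
    have hdK : K.det = -2*a^2*b*f + 2*a*b^2*(d*e) := by
      simp [hK, Matrix.det_fin_three]
      ring
    have hunit : IsUnit K := (Matrix.isUnit_iff_isUnit_det K).mpr
      (isUnit_iff_ne_zero.mpr (by rw [hdK]; exact hne))
    have := Matrix.rank_of_isUnit K hunit
    rw [this] at hrk
    simp at hrk
  have e1 := hdet 1 1 (by norm_num)
  have e2 := hdet 1 (-1) (by norm_num)
  constructor
  · linear_combination (1/4)*e2 - (1/4)*e1
  · linear_combination (1/4)*e1 + (1/4)*e2

lemma rank4 (x y z w : Fin 4 → ℂ) (h : LinearIndependent ℂ ![x, y, z, w]) :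
    4 ≤ ((1:ℂ) • (vecMulVec x y + vecMulVec y x) +
      (1:ℂ) • (vecMulVec z w + vecMulVec w z)).rank := by
  obtain ⟨u, hu⟩ := exists_dual _ h
  have hxu : ∀ j, x ⬝ᵥ u j = if (0 : Fin 4) = j then 1 else 0 := fun j => hu 0 j
  have hyu : ∀ j, y ⬝ᵥ u j = if (1 : Fin 4) = j then 1 else 0 := fun j => hu 1 j
  have hzu : ∀ j, z ⬝ᵥ u j = if (2 : Fin 4) = j then 1 else 0 := fun j => hu 2 j
  have hwu : ∀ j, w ⬝ᵥ u j = if (3 : Fin 4) = j then 1 else 0 := fun j => hu 3 j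
  set G : Matrix (Fin 4) (Fin 4) ℂ :=
    (1:ℂ) • (vecMulVec x y + vecMulVec y x) + (1:ℂ) • (vecMulVec z w + vecMulVec w z) with hG
  set K : Matrix (Fin 4) (Fin 4) ℂ := !![0,1,0,0; 1,0,0,0; 0,0,0,1; 0,0,1,0] with hK
  have hKG : ∀ i j, K i j = u i ⬝ᵥ (G *ᵥ u j) := by
    intro i j
    have expand : u i ⬝ᵥ (G *ᵥ u j) =
        (x ⬝ᵥ u i)*(y ⬝ᵥ u j) + (y ⬝ᵥ u i)*(x ⬝ᵥ u j) +
        ((z ⬝ᵥ u i)*(w ⬝ᵥ u j) + (w ⬝ᵥ u i)*(z ⬝ᵥ u j)) := by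
      simp only [hG, add_mulVec, smul_mulVec, vecMulVec_mulVec',
        dotProduct_add, dotProduct_smul, smul_eq_mul, one_smul,
        dotProduct_comm x (u i), dotProduct_comm y (u i), dotProduct_comm z (u i),
        dotProduct_comm w (u i), dotProduct_comm x (u j), dotProduct_comm y (u j),
        dotProduct_comm z (u j), dotProduct_comm w (u j)]
      ring
    rw [expand]
    fin_cases i <;> fin_cases j <;> simp [hxu, hyu, hzu, hwu, hK, vecHead, vecTail]
  have hrk : K.rank ≤ G.rank := rank_lower G u K hKG
  have hdK : K.det = 1 := by
    simp [hK, Matrix.det_succ_row_zero, Fin.sum_univ_succ]; rfl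
  have hunit : IsUnit K := (Matrix.isUnit_iff_isUnit_det K).mpr
    (isUnit_iff_ne_zero.mpr (by rw [hdK]; norm_num))
  have h4 := Matrix.rank_of_isUnit K hunit
  rw [h4] at hrk
  simpa using hrk

lemma binary (l₁ m₁ : Fin 4 → ℂ) (a b c d : ℂ) (ha : a ≠ 0) (hb : b ≠ 0)
    (hc : c ≠ 0) (hd : d ≠ 0)
    (hr : ∀ s t : ℂ, ¬(s = 0 ∧ t = 0) →
      (s • (vecMulVec l₁ m₁ + vecMulVec m₁ l₁) +
        t • (vecMulVec (a•l₁+b•m₁) (c•l₁+d•m₁) +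
          vecMulVec (c•l₁+d•m₁) (a•l₁+b•m₁))).rank = 2) : False := by
  obtain ⟨ε, hε⟩ := IsAlgClosed.exists_pow_nat_eq (a*b*c*d) (n := 2) (by norm_num)
  set s : ℂ := 2*ε - (a*d+b*c) with hs
  set v : Fin 4 → ℂ := (a*c) • l₁ + ε • m₁ with hv
  have hGv : s • (vecMulVec l₁ m₁ + vecMulVec m₁ l₁) +
      (1:ℂ) • (vecMulVec (a•l₁+b•m₁) (c•l₁+d•m₁) + vecMulVec (c•l₁+d•m₁) (a•l₁+b•m₁)) =
      vecMulVec ((2/(a*c)) • v) v := by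
    ext i j
    simp only [Matrix.add_apply, Matrix.smul_apply, vecMulVec_apply, Pi.add_apply,
      Pi.smul_apply, smul_eq_mul, one_mul, hs, hv]
    field_simp
    ring_nf
    linear_combination (-2 * m₁ i * m₁ j) * hε
  have h2 := hr s 1 (by norm_num)
  rw [hGv] at h2
  have hle : (vecMulVec ((2/(a*c)) • v) v).rank ≤ 1 := by
    rw [vecMulVec_eq (Fin 1)]
    refine le_trans (Matrix.rank_mul_le_left _ _) ?_
    exact le_of_le_of_eq (Matrix.rank_le_card_width (replicateCol (Fin 1) ((2/(a*c)) • v))) (by simp)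
  omega

lemma main_disj (l₁ m₁ l₂ m₂ : Fin 4 → ℂ)
    (h₁ : LinearIndependent ℂ ![l₁, m₁]) (h₂ : LinearIndependent ℂ ![l₂, m₂])
    (hrank : ∀ a b : ℂ, ¬(a = 0 ∧ b = 0) →
      (a • (vecMulVec l₁ m₁ + vecMulVec m₁ l₁) +
        b • (vecMulVec l₂ m₂ + vecMulVec m₂ l₂)).rank = 2) :
    (∃ c : ℂ, c ≠ 0 ∧ l₂ = c • l₁) ∨ (∃ c : ℂ, c ≠ 0 ∧ l₂ = c • m₁) ∨
    (∃ c : ℂ, c ≠ 0 ∧ m₂ = c • l₁) ∨ (∃ c : ℂ, c ≠ 0 ∧ m₂ = c • m₁) := by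
  have hl₂0 : l₂ ≠ 0 := by simpa using h₂.ne_zero 0
  have hm₂0 : m₂ ≠ 0 := by simpa using h₂.ne_zero 1
  by_cases hl : l₂ ∈ Submodule.span ℂ ({l₁, m₁} : Set (Fin 4 → ℂ))
  · by_cases hm : m₂ ∈ Submodule.span ℂ ({l₁, m₁} : Set (Fin 4 → ℂ))
    · obtain ⟨a, b, hab⟩ := Submodule.mem_span_pair.mp hl
      obtain ⟨c, d, hcd⟩ := Submodule.mem_span_pair.mp hm
      by_cases hb : b = 0
      · exact Or.inl ⟨a, fun ha => hl₂0 (by rw [← hab, ha, hb]; simp),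
          by rw [← hab, hb]; simp⟩
      · by_cases ha : a = 0
        · exact Or.inr (Or.inl ⟨b, hb, by rw [← hab, ha]; simp⟩)
        · by_cases hd : d = 0
          · exact Or.inr (Or.inr (Or.inl ⟨c, fun hc => hm₂0 (by rw [← hcd, hc, hd]; simp),
              by rw [← hcd, hd]; simp⟩))
          · by_cases hc : c = 0
            · exact Or.inr (Or.inr (Or.inr ⟨d, hd, by rw [← hcd, hc]; simp⟩))
            · exfalso
              apply binary l₁ m₁ a b c d ha hb hc hd
              intro s t hst
              have := hrank s t hst
              rw [← hab, ← hcd] at this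
              exact this
    · obtain ⟨d, e, hde⟩ := Submodule.mem_span_pair.mp hl
      have htri : LinearIndependent ℂ ![l₁, m₁, m₂] := li_triple h₁ hm
      have hr' : ∀ a b : ℂ, ¬(a = 0 ∧ b = 0) →
          (a • (vecMulVec l₁ m₁ + vecMulVec m₁ l₁) +
            b • (vecMulVec m₂ (d•l₁+e•m₁+(0:ℂ)•m₂) +
              vecMulVec (d•l₁+e•m₁+(0:ℂ)•m₂) m₂)).rank = 2 := by
        intro a b hab
        have h0 : d•l₁+e•m₁+(0:ℂ)•m₂ = l₂ := by rw [zero_smul, add_zero, hde]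
        rw [h0, add_comm (vecMulVec m₂ l₂) (vecMulVec l₂ m₂)]
        exact hrank a b hab
      obtain ⟨-, hde0⟩ := key l₁ m₁ m₂ htri d e 0 hr'
      rcases mul_eq_zero.mp hde0 with h | h
      · exact Or.inr (Or.inl ⟨e, fun he => hl₂0 (by rw [← hde, h, he]; simp),
          by rw [← hde, h]; simp⟩)
      · exact Or.inl ⟨d, fun hd0 => hl₂0 (by rw [← hde, h, hd0]; simp),
          by rw [← hde, h]; simp⟩
  · by_cases hm : m₂ ∈ Submodule.span ℂ ({l₁, m₁} : Set (Fin 4 → ℂ))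
    · obtain ⟨d, e, hde⟩ := Submodule.mem_span_pair.mp hm
      have htri : LinearIndependent ℂ ![l₁, m₁, l₂] := li_triple h₁ hl
      have hr' : ∀ a b : ℂ, ¬(a = 0 ∧ b = 0) →
          (a • (vecMulVec l₁ m₁ + vecMulVec m₁ l₁) +
            b • (vecMulVec l₂ (d•l₁+e•m₁+(0:ℂ)•l₂) +
              vecMulVec (d•l₁+e•m₁+(0:ℂ)•l₂) l₂)).rank = 2 := by
        intro a b hab
        have h0 : d•l₁+e•m₁+(0:ℂ)•l₂ = m₂ := by rw [zero_smul, add_zero, hde]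
        rw [h0]
        exact hrank a b hab
      obtain ⟨-, hde0⟩ := key l₁ m₁ l₂ htri d e 0 hr'
      rcases mul_eq_zero.mp hde0 with h | h
      · exact Or.inr (Or.inr (Or.inr ⟨e, fun he => hm₂0 (by rw [← hde, h, he]; simp),
          by rw [← hde, h]; simp⟩))
      · exact Or.inr (Or.inr (Or.inl ⟨d, fun hd0 => hm₂0 (by rw [← hde, h, hd0]; simp),
          by rw [← hde, h]; simp⟩))
    · exfalso
      by_cases hm3 : m₂ ∈ Submodule.span ℂ ({l₁, m₁, l₂} : Set (Fin 4 → ℂ))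
      · rw [Submodule.mem_span_insert] at hm3
        obtain ⟨p, zz, hzz, hm2⟩ := hm3
        obtain ⟨q, r, hqr⟩ := Submodule.mem_span_pair.mp hzz
        have hm2' : p•l₁+q•m₁+r•l₂ = m₂ := by rw [hm2, ← hqr, add_assoc]
        have htri : LinearIndependent ℂ ![l₁, m₁, l₂] := li_triple h₁ hl
        have hr' : ∀ a b : ℂ, ¬(a = 0 ∧ b = 0) →
            (a • (vecMulVec l₁ m₁ + vecMulVec m₁ l₁) +
              b • (vecMulVec l₂ (p•l₁+q•m₁+r•l₂) +
                vecMulVec (p•l₁+q•m₁+r•l₂) l₂)).rank = 2 := by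
          intro a b hab
          rw [hm2']
          exact hrank a b hab
        obtain ⟨hf, -⟩ := key l₁ m₁ l₂ htri p q r hr'
        exact hm (Submodule.mem_span_pair.mpr ⟨p, q, by rw [← hm2', hf]; simp⟩)
      · have hq := li_quad (li_triple h₁ hl) hm3
        have h4 := rank4 l₁ m₁ l₂ m₂ hq
        have h2 := hrank 1 1 (by norm_num)
        omega

theorem pencil_no_rank_one_common_factor
    (l₁ m₁ l₂ m₂ : Fin 4 → ℂ)
    (h₁ : LinearIndependent ℂ ![l₁, m₁]) (h₂ : LinearIndependent ℂ ![l₂, m₂])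
    (hind : LinearIndependent ℂ
      ![vecMulVec l₁ m₁ + vecMulVec m₁ l₁, vecMulVec l₂ m₂ + vecMulVec m₂ l₂])
    (hrank : ∀ a b : ℂ, ¬(a = 0 ∧ b = 0) →
      (a • (vecMulVec l₁ m₁ + vecMulVec m₁ l₁) +
        b • (vecMulVec l₂ m₂ + vecMulVec m₂ l₂)).rank = 2) :
    ∃ a₁ b₁ a₂ b₂ : Fin 4 → ℂ,
      ((a₁ = l₁ ∧ b₁ = m₁) ∨ (a₁ = m₁ ∧ b₁ = l₁)) ∧
      ((a₂ = l₂ ∧ b₂ = m₂) ∨ (a₂ = m₂ ∧ b₂ = l₂)) ∧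
      (∃ c : ℂ, c ≠ 0 ∧ a₂ = c • a₁) ∧
      {x : Fin 4 → ℂ | (l₁ ⬝ᵥ x) * (m₁ ⬝ᵥ x) = 0 ∧ (l₂ ⬝ᵥ x) * (m₂ ⬝ᵥ x) = 0} =
        {x : Fin 4 → ℂ | a₁ ⬝ᵥ x = 0} ∪ {x : Fin 4 → ℂ | b₁ ⬝ᵥ x = 0 ∧ b₂ ⬝ᵥ x = 0} := by
  rcases main_disj l₁ m₁ l₂ m₂ h₁ h₂ hrank with ⟨c, hc, hceq⟩ | ⟨c, hc, hceq⟩ |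
    ⟨c, hc, hceq⟩ | ⟨c, hc, hceq⟩
  · refine ⟨l₁, m₁, l₂, m₂, Or.inl ⟨rfl, rfl⟩, Or.inl ⟨rfl, rfl⟩, ⟨c, hc, hceq⟩, ?_⟩
    ext x
    simp only [Set.mem_setOf_eq, Set.mem_union, hceq, smul_dotProduct, smul_eq_mul,
      mul_eq_zero, hc, false_or]
    tauto
  · refine ⟨m₁, l₁, l₂, m₂, Or.inr ⟨rfl, rfl⟩, Or.inl ⟨rfl, rfl⟩, ⟨c, hc, hceq⟩, ?_⟩
    ext x
    simp only [Set.mem_setOf_eq, Set.mem_union, hceq, smul_dotProduct, smul_eq_mul,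
      mul_eq_zero, hc, false_or]
    tauto
  · refine ⟨l₁, m₁, m₂, l₂, Or.inl ⟨rfl, rfl⟩, Or.inr ⟨rfl, rfl⟩, ⟨c, hc, hceq⟩, ?_⟩
    ext x
    simp only [Set.mem_setOf_eq, Set.mem_union, hceq, smul_dotProduct, smul_eq_mul,
      mul_eq_zero, hc, false_or]
    tauto
  · refine ⟨m₁, l₁, m₂, l₂, Or.inr ⟨rfl, rfl⟩, Or.inr ⟨rfl, rfl⟩, ⟨c, hc, hceq⟩, ?_⟩
    ext x
    simp only [Set.mem_setOf_eq, Set.mem_union, hceq, smul_dotProduct, smul_eq_mul,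
      mul_eq_zero, hc, false_or]
    tauto
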